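/- Substitution system for λ-calculus with explicit flattening on the flattening-free terms: let (Lam, α, ⦃−⦄) be the initial substitution system for the λ-calculus signature LC = App + Abs, and let μ^Lam := ⦃id_{(Lam,η)}⦄ : Lam·Lam → Lam. Then (Lam, [α, μ^Lam]) is an (Id + LCμ)-algebra for the extended signature LCμ = LC + Flat, and defining ⦃f⦄^Flat := ⦃f⦄ for each pointed f : (Z,e) → (Lam,η) yields a bracket operation on this algebra, so (Lam, [α, μ^Lam], ⦃−⦄^Flat) is a heterogeneous substitution system for LCμ. The only non-trivial verification is ⦃f⦄^Flat ∘ (μ^Lam·Z) = μ^Lam ∘ Lam(⦃f⦄^Flat) ∘ (⦃f⦄^Flat·Lam·Z) ∘ (Lam·e·Lam·Z). -/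

import Mathlib

open CategoryTheory Limits

universe v u

/-- A pointed endofunctor on `C`. -/
structure Ptd (C : Type u) [Category.{v} C] where
  Z : C ⥤ C
  e : 𝟭 C ⟶ Z

/-- The data of a signature over `C`: an endofunctor `H` on `[C,C]` together with a
strength `θ : (H −)·U∼ ⟶ H (−·U∼)` (here `X·Z` is the composite `Z ⋙ X`). -/
structure SigData (C : Type u) [Category.{v} C] where
  H : (C ⥤ C) ⥤ (C ⥤ C)
  θ : ∀ (X : C ⥤ C) (Z : Ptd C), (Z.Z ⋙ H.obj X) ⟶ H.obj (Z.Z ⋙ X)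

variable {C : Type u} [Category.{v} C]

/-- A heterogeneous substitution system for the signature data `(H, θ)`. -/
structure HSS (S : SigData C) where
  T : C ⥤ C
  η : 𝟭 C ⟶ T
  τ : S.H.obj T ⟶ T
  bracket : ∀ (Z : Ptd C) (f : Z.Z ⟶ T), Z.e ≫ f = η → (Z.Z ⋙ T ⟶ T)
  bracket_η : ∀ (Z : Ptd C) (f : Z.Z ⟶ T) (hf : Z.e ≫ f = η),
      Functor.whiskerLeft Z.Z η ≫ bracket Z f hf = f
  bracket_τ : ∀ (Z : Ptd C) (f : Z.Z ⟶ T) (hf : Z.e ≫ f = η),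
      Functor.whiskerLeft Z.Z τ ≫ bracket Z f hf = S.θ T Z ≫ S.H.map (bracket Z f hf) ≫ τ
  bracket_unique : ∀ (Z : Ptd C) (f : Z.Z ⟶ T) (hf : Z.e ≫ f = η)
      (h : Z.Z ⋙ T ⟶ T),
      Functor.whiskerLeft Z.Z η ≫ h = f →
      Functor.whiskerLeft Z.Z τ ≫ h = S.θ T Z ≫ S.H.map h ≫ τ →
      h = bracket Z f hf

section Signatures

variable (C)
variable [Limits.HasBinaryProducts C] [Limits.HasBinaryCoproducts C]
  [Limits.HasTerminal C]

/-- The application signature `H^App (T) = T × T`, with strength given pointwise by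
the identity. -/
noncomputable def appSig : SigData C where
  H := { obj := fun X => Limits.prod X X
         map := fun f => Limits.prod.map f f
         map_id := by intros; simp
         map_comp := by intros; simp }
  θ := fun X Z => Limits.prod.lift (Functor.whiskerLeft Z.Z Limits.prod.fst)
        (Functor.whiskerLeft Z.Z Limits.prod.snd)

/-- The `option` functor `A ↦ 1 + A`. -/
noncomputable def optionF : C ⥤ C where
  obj A := Limits.coprod (⊤_ C) A
  map f := Limits.coprod.map (𝟙 (⊤_ C)) f
  map_id := by intros; simp
  map_comp := by intros; simp

/-- The abstraction signature `H^Abs (T) = T·option`, with strength whose component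
at `A` is `X [e_{1+A} ∘ inl, Z(inr)]`. -/
noncomputable def absSig : SigData C where
  H := { obj := fun T => optionF C ⋙ T
         map := fun f => Functor.whiskerLeft (optionF C) f
         map_id := by intros; simp
         map_comp := by intros; simp }
  θ := fun X Z =>
    { app := fun A => X.map (Limits.coprod.desc
        (Limits.coprod.inl ≫ Z.e.app ((optionF C).obj A))
        (Z.Z.map Limits.coprod.inr))
      naturality := by
        intro A B f
        show X.map _ ≫ X.map _ = X.map _ ≫ X.map _
        refine (X.map_comp _ _).symm.trans ((congrArg X.map ?_).trans (X.map_comp _ _))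
        apply Limits.coprod.hom_ext
        · simp [optionF, ← NatTrans.naturality]
          erw [Limits.coprod.inl_desc, Limits.coprod.inl_desc]
        · simp only [optionF]
          rw [Limits.coprod.inr_map_assoc, Limits.coprod.inr_desc,
            Limits.coprod.inr_desc_assoc, ← Z.Z.map_comp, ← Z.Z.map_comp,
            Limits.coprod.inr_map] }

/-- The explicit-flattening signature `H^Flat (T) = T·T`, with strength
`θ^Flat_{X,(Z,e)} = X·e·X·Z`. -/
def flatSig : SigData C where
  H := { obj := fun X => X ⋙ X
         map := fun f => NatTrans.hcomp f f
         map_id := by intros; ext; simp [NatTrans.hcomp]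
         map_comp := by intros; ext; simp [NatTrans.hcomp] }
  θ := fun X Z => Functor.whiskerLeft (Z.Z ⋙ X) (Functor.whiskerRight Z.e X)

variable {C}

/-- The sum of two signatures (pointwise coproduct of the functors, coproduct of the
strengths modulo the canonical isomorphism `(H X + H' X)·Z ≅ (H X)·Z + (H' X)·Z`). -/
noncomputable def SigData.sum (S S' : SigData C) : SigData C where
  H := { obj := fun X => Limits.coprod (S.H.obj X) (S'.H.obj X)
         map := fun f => Limits.coprod.map (S.H.map f) (S'.H.map f)
         map_id := by intros; simp
         map_comp := by intros; simp }
  θ := fun X Z =>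
    (Limits.PreservesColimitPair.iso ((Functor.whiskeringLeft C C C).obj Z.Z)
        (S.H.obj X) (S'.H.obj X)).inv ≫
      Limits.coprod.map (S.θ X Z) (S'.θ X Z)

/-- The signature `LC` of the λ-calculus: application plus abstraction. -/
noncomputable def LC : SigData C := (appSig C).sum (absSig C)

/-- The signature `LCμ` of the λ-calculus with explicit flattening. -/
noncomputable def LCμ : SigData C := (LC (C := C)).sum (flatSig C)

end Signatures

variable [Limits.HasBinaryProducts C] [Limits.HasBinaryCoproducts C]
  [Limits.HasTerminal C]

open Functor

section Aux

set_option linter.unusedSectionVars false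
set_option maxHeartbeats 2000000

lemma whisker_exch {F G : C ⥤ C} (β : F ⟶ G) {P Q : C ⥤ C} (α : P ⟶ Q) :
    whiskerLeft P β ≫ whiskerRight α G = whiskerRight α F ≫ whiskerLeft Q β := by
  ext A; exact (β.naturality (α.app A)).symm

variable [Limits.HasBinaryProducts C] [Limits.HasBinaryCoproducts C]
  [Limits.HasTerminal C]

lemma sum_H_map (S S' : SigData C) {F G : C ⥤ C} (f : F ⟶ G) :
    (S.sum S').H.map f = Limits.coprod.map (S.H.map f) (S'.H.map f) := rfl

lemma sum_inl (S S' : SigData C) (X : C ⥤ C) (W : Ptd C) :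
    whiskerLeft W.Z (coprod.inl : S.H.obj X ⟶ (S.sum S').H.obj X) ≫ (S.sum S').θ X W
      = S.θ X W ≫ coprod.inl := by
  dsimp only [SigData.sum]
  rw [← Category.assoc]
  have h1 : whiskerLeft W.Z (coprod.inl : S.H.obj X ⟶ (S.sum S').H.obj X) ≫
      (PreservesColimitPair.iso ((whiskeringLeft C C C).obj W.Z)
        (S.H.obj X) (S'.H.obj X)).inv = coprod.inl := by
    rw [Iso.comp_inv_eq, PreservesColimitPair.iso_hom]
    exact (coprodComparison_inl ((whiskeringLeft C C C).obj W.Z)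
      (A := S.H.obj X) (B := S'.H.obj X)).symm
  rw [h1, coprod.inl_map]

lemma sum_inr (S S' : SigData C) (X : C ⥤ C) (W : Ptd C) :
    whiskerLeft W.Z (coprod.inr : S'.H.obj X ⟶ (S.sum S').H.obj X) ≫ (S.sum S').θ X W
      = S'.θ X W ≫ coprod.inr := by
  dsimp only [SigData.sum]
  rw [← Category.assoc]
  have h1 : whiskerLeft W.Z (coprod.inr : S'.H.obj X ⟶ (S.sum S').H.obj X) ≫
      (PreservesColimitPair.iso ((whiskeringLeft C C C).obj W.Z)
        (S.H.obj X) (S'.H.obj X)).inv = coprod.inr := by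
    rw [Iso.comp_inv_eq, PreservesColimitPair.iso_hom]
    exact (coprodComparison_inr ((whiskeringLeft C C C).obj W.Z)
      (A := S.H.obj X) (B := S'.H.obj X)).symm
  rw [h1, coprod.inr_map]

lemma sum_hom_ext (S S' : SigData C) (X : C ⥤ C) (W : Ptd C) {Y : C ⥤ C}
    {a b : (W.Z ⋙ (S.sum S').H.obj X) ⟶ Y}
    (h1 : whiskerLeft W.Z (coprod.inl : S.H.obj X ⟶ (S.sum S').H.obj X) ≫ a
        = whiskerLeft W.Z coprod.inl ≫ b)
    (h2 : whiskerLeft W.Z (coprod.inr : S'.H.obj X ⟶ (S.sum S').H.obj X) ≫ a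
        = whiskerLeft W.Z coprod.inr ≫ b) : a = b := by
  refine (cancel_epi (PreservesColimitPair.iso ((whiskeringLeft C C C).obj W.Z)
      (S.H.obj X) (S'.H.obj X)).hom).1 ?_
  apply coprod.hom_ext
  · erw [← Category.assoc, ← Category.assoc, PreservesColimitPair.iso_hom,
      coprodComparison_inl]
    exact h1
  · erw [← Category.assoc, ← Category.assoc, PreservesColimitPair.iso_hom,
      coprodComparison_inr]
    exact h2

/-! ### abstract coherence lemmas for sums of signatures -/

lemma sum_nat_X (S S' : SigData C)
    (hS : ∀ (F G : C ⥤ C) (m : F ⟶ G) (W : Ptd C),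
      whiskerLeft W.Z (S.H.map m) ≫ S.θ G W = S.θ F W ≫ S.H.map (whiskerLeft W.Z m))
    (hS' : ∀ (F G : C ⥤ C) (m : F ⟶ G) (W : Ptd C),
      whiskerLeft W.Z (S'.H.map m) ≫ S'.θ G W = S'.θ F W ≫ S'.H.map (whiskerLeft W.Z m))
    (F G : C ⥤ C) (m : F ⟶ G) (W : Ptd C) :
    whiskerLeft W.Z ((S.sum S').H.map m) ≫ (S.sum S').θ G W
      = (S.sum S').θ F W ≫ (S.sum S').H.map (whiskerLeft W.Z m) := by
  apply sum_hom_ext S S' F W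
  · calc whiskerLeft W.Z (coprod.inl : S.H.obj F ⟶ (S.sum S').H.obj F) ≫
          whiskerLeft W.Z ((S.sum S').H.map m) ≫ (S.sum S').θ G W
        = (whiskerLeft W.Z (S.H.map m) ≫ whiskerLeft W.Z coprod.inl) ≫
            (S.sum S').θ G W := by
          erw [← Category.assoc, ← whiskerLeft_comp, ← whiskerLeft_comp,
            sum_H_map, coprod.inl_map]
          rfl
      _ = (whiskerLeft W.Z (S.H.map m) ≫ S.θ G W ≫ coprod.inl :
          W.Z ⋙ S.H.obj F ⟶ (S.sum S').H.obj (W.Z ⋙ G)) := by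
          erw [Category.assoc, sum_inl S S' G W]
          rfl
      _ = ((S.θ F W ≫ S.H.map (whiskerLeft W.Z m)) ≫ coprod.inl :
          W.Z ⋙ S.H.obj F ⟶ (S.sum S').H.obj (W.Z ⋙ G)) := by
          erw [← Category.assoc, hS F G m W]
      _ = S.θ F W ≫ coprod.inl ≫ (S.sum S').H.map (whiskerLeft W.Z m) := by
          erw [sum_H_map, Category.assoc, coprod.inl_map]
          rfl
      _ = whiskerLeft W.Z coprod.inl ≫ (S.sum S').θ F W ≫
            (S.sum S').H.map (whiskerLeft W.Z m) := by
          erw [← Category.assoc, ← sum_inl S S' F W, Category.assoc]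
          rfl
  · calc whiskerLeft W.Z (coprod.inr : S'.H.obj F ⟶ (S.sum S').H.obj F) ≫
          whiskerLeft W.Z ((S.sum S').H.map m) ≫ (S.sum S').θ G W
        = (whiskerLeft W.Z (S'.H.map m) ≫ whiskerLeft W.Z coprod.inr) ≫
            (S.sum S').θ G W := by
          erw [← Category.assoc, ← whiskerLeft_comp, ← whiskerLeft_comp,
            sum_H_map, coprod.inr_map]
          rfl
      _ = (whiskerLeft W.Z (S'.H.map m) ≫ S'.θ G W ≫ coprod.inr :
          W.Z ⋙ S'.H.obj F ⟶ (S.sum S').H.obj (W.Z ⋙ G)) := by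
          erw [Category.assoc, sum_inr S S' G W]
          rfl
      _ = ((S'.θ F W ≫ S'.H.map (whiskerLeft W.Z m)) ≫ coprod.inr :
          W.Z ⋙ S'.H.obj F ⟶ (S.sum S').H.obj (W.Z ⋙ G)) := by
          erw [← Category.assoc, hS' F G m W]
      _ = S'.θ F W ≫ coprod.inr ≫ (S.sum S').H.map (whiskerLeft W.Z m) := by
          erw [sum_H_map, Category.assoc, coprod.inr_map]
          rfl
      _ = whiskerLeft W.Z coprod.inr ≫ (S.sum S').θ F W ≫
            (S.sum S').H.map (whiskerLeft W.Z m) := by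
          erw [← Category.assoc, ← sum_inr S S' F W, Category.assoc]
          rfl

lemma sum_nat_W (S S' : SigData C)
    (hS : ∀ (X : C ⥤ C) (W1 W2 : Ptd C) (g : W1.Z ⟶ W2.Z), W1.e ≫ g = W2.e →
      whiskerRight g (S.H.obj X) ≫ S.θ X W2 = S.θ X W1 ≫ S.H.map (whiskerRight g X))
    (hS' : ∀ (X : C ⥤ C) (W1 W2 : Ptd C) (g : W1.Z ⟶ W2.Z), W1.e ≫ g = W2.e →
      whiskerRight g (S'.H.obj X) ≫ S'.θ X W2 = S'.θ X W1 ≫ S'.H.map (whiskerRight g X))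
    (X : C ⥤ C) (W1 W2 : Ptd C) (g : W1.Z ⟶ W2.Z) (hg : W1.e ≫ g = W2.e) :
    whiskerRight g ((S.sum S').H.obj X) ≫ (S.sum S').θ X W2
      = (S.sum S').θ X W1 ≫ (S.sum S').H.map (whiskerRight g X) := by
  apply sum_hom_ext S S' X W1
  · calc whiskerLeft W1.Z (coprod.inl : S.H.obj X ⟶ (S.sum S').H.obj X) ≫
          whiskerRight g ((S.sum S').H.obj X) ≫ (S.sum S').θ X W2
        = (whiskerLeft W1.Z coprod.inl ≫ whiskerRight g ((S.sum S').H.obj X)) ≫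
            (S.sum S').θ X W2 := (Category.assoc _ _ _).symm
      _ = (whiskerRight g (S.H.obj X) ≫ whiskerLeft W2.Z coprod.inl) ≫
            (S.sum S').θ X W2 := by
          exact congrArg (· ≫ (S.sum S').θ X W2) (whisker_exch coprod.inl g)
      _ = (whiskerRight g (S.H.obj X) ≫ S.θ X W2 ≫ coprod.inl :
          W1.Z ⋙ S.H.obj X ⟶ (S.sum S').H.obj (W2.Z ⋙ X)) := by
          erw [Category.assoc, sum_inl S S' X W2]
          rfl
      _ = ((S.θ X W1 ≫ S.H.map (whiskerRight g X)) ≫ coprod.inl :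
          W1.Z ⋙ S.H.obj X ⟶ (S.sum S').H.obj (W2.Z ⋙ X)) := by
          erw [← Category.assoc, hS X W1 W2 g hg]
      _ = S.θ X W1 ≫ coprod.inl ≫ (S.sum S').H.map (whiskerRight g X) := by
          erw [sum_H_map, Category.assoc, coprod.inl_map]
          rfl
      _ = whiskerLeft W1.Z coprod.inl ≫ (S.sum S').θ X W1 ≫
            (S.sum S').H.map (whiskerRight g X) := by
          erw [← Category.assoc, ← sum_inl S S' X W1, Category.assoc]
          rfl
  · calc whiskerLeft W1.Z (coprod.inr : S'.H.obj X ⟶ (S.sum S').H.obj X) ≫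
          whiskerRight g ((S.sum S').H.obj X) ≫ (S.sum S').θ X W2
        = (whiskerLeft W1.Z coprod.inr ≫ whiskerRight g ((S.sum S').H.obj X)) ≫
            (S.sum S').θ X W2 := (Category.assoc _ _ _).symm
      _ = (whiskerRight g (S'.H.obj X) ≫ whiskerLeft W2.Z coprod.inr) ≫
            (S.sum S').θ X W2 := by
          exact congrArg (· ≫ (S.sum S').θ X W2) (whisker_exch coprod.inr g)
      _ = (whiskerRight g (S'.H.obj X) ≫ S'.θ X W2 ≫ coprod.inr :
          W1.Z ⋙ S'.H.obj X ⟶ (S.sum S').H.obj (W2.Z ⋙ X)) := by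
          erw [Category.assoc, sum_inr S S' X W2]
          rfl
      _ = ((S'.θ X W1 ≫ S'.H.map (whiskerRight g X)) ≫ coprod.inr :
          W1.Z ⋙ S'.H.obj X ⟶ (S.sum S').H.obj (W2.Z ⋙ X)) := by
          erw [← Category.assoc, hS' X W1 W2 g hg]
      _ = S'.θ X W1 ≫ coprod.inr ≫ (S.sum S').H.map (whiskerRight g X) := by
          erw [sum_H_map, Category.assoc, coprod.inr_map]
          rfl
      _ = whiskerLeft W1.Z coprod.inr ≫ (S.sum S').θ X W1 ≫
            (S.sum S').H.map (whiskerRight g X) := by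
          erw [← Category.assoc, ← sum_inr S S' X W1, Category.assoc]
          rfl

lemma sum_pent (S S' : SigData C)
    (hS : ∀ (X : C ⥤ C) (Z W : Ptd C),
      whiskerLeft Z.Z (S.θ X W) ≫ S.θ (W.Z ⋙ X) Z
        = S.θ X ⟨Z.Z ⋙ W.Z, Z.e ≫ whiskerLeft Z.Z W.e⟩)
    (hS' : ∀ (X : C ⥤ C) (Z W : Ptd C),
      whiskerLeft Z.Z (S'.θ X W) ≫ S'.θ (W.Z ⋙ X) Z
        = S'.θ X ⟨Z.Z ⋙ W.Z, Z.e ≫ whiskerLeft Z.Z W.e⟩)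
    (X : C ⥤ C) (Z W : Ptd C) :
    whiskerLeft Z.Z ((S.sum S').θ X W) ≫ (S.sum S').θ (W.Z ⋙ X) Z
      = (S.sum S').θ X ⟨Z.Z ⋙ W.Z, Z.e ≫ whiskerLeft Z.Z W.e⟩ := by
  apply sum_hom_ext S S' X (⟨Z.Z ⋙ W.Z, Z.e ≫ whiskerLeft Z.Z W.e⟩ : Ptd C)
  · calc whiskerLeft (Z.Z ⋙ W.Z) (coprod.inl : S.H.obj X ⟶ (S.sum S').H.obj X) ≫
          whiskerLeft Z.Z ((S.sum S').θ X W) ≫ (S.sum S').θ (W.Z ⋙ X) Z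
        = whiskerLeft Z.Z (S.θ X W ≫ coprod.inl) ≫ (S.sum S').θ (W.Z ⋙ X) Z := by
          erw [← Category.assoc, show (whiskerLeft (Z.Z ⋙ W.Z)
              (coprod.inl : S.H.obj X ⟶ (S.sum S').H.obj X)
              : Z.Z ⋙ W.Z ⋙ S.H.obj X ⟶ _)
            = whiskerLeft Z.Z (whiskerLeft W.Z coprod.inl) from rfl,
            ← whiskerLeft_comp, sum_inl S S' X W]
          rfl
      _ = (whiskerLeft Z.Z (S.θ X W) ≫ S.θ (W.Z ⋙ X) Z ≫ coprod.inl :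
          (Z.Z ⋙ W.Z) ⋙ S.H.obj X ⟶ (S.sum S').H.obj ((Z.Z ⋙ W.Z) ⋙ X)) := by
          erw [whiskerLeft_comp, Category.assoc, sum_inl S S' (W.Z ⋙ X) Z]
          rfl
      _ = (S.θ X ⟨Z.Z ⋙ W.Z, Z.e ≫ whiskerLeft Z.Z W.e⟩ ≫ coprod.inl :
          (Z.Z ⋙ W.Z) ⋙ S.H.obj X ⟶ (S.sum S').H.obj ((Z.Z ⋙ W.Z) ⋙ X)) := by
          erw [← Category.assoc, hS X Z W]; exact rfl
      _ = whiskerLeft (Z.Z ⋙ W.Z) coprod.inl ≫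
            (S.sum S').θ X ⟨Z.Z ⋙ W.Z, Z.e ≫ whiskerLeft Z.Z W.e⟩ :=
          (sum_inl S S' X (⟨Z.Z ⋙ W.Z, Z.e ≫ whiskerLeft Z.Z W.e⟩ : Ptd C)).symm
  · calc whiskerLeft (Z.Z ⋙ W.Z) (coprod.inr : S'.H.obj X ⟶ (S.sum S').H.obj X) ≫
          whiskerLeft Z.Z ((S.sum S').θ X W) ≫ (S.sum S').θ (W.Z ⋙ X) Z
        = whiskerLeft Z.Z (S'.θ X W ≫ coprod.inr) ≫ (S.sum S').θ (W.Z ⋙ X) Z := by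
          erw [← Category.assoc, show (whiskerLeft (Z.Z ⋙ W.Z)
              (coprod.inr : S'.H.obj X ⟶ (S.sum S').H.obj X)
              : Z.Z ⋙ W.Z ⋙ S'.H.obj X ⟶ _)
            = whiskerLeft Z.Z (whiskerLeft W.Z coprod.inr) from rfl,
            ← whiskerLeft_comp, sum_inr S S' X W]
          rfl
      _ = (whiskerLeft Z.Z (S'.θ X W) ≫ S'.θ (W.Z ⋙ X) Z ≫ coprod.inr :
          (Z.Z ⋙ W.Z) ⋙ S'.H.obj X ⟶ (S.sum S').H.obj ((Z.Z ⋙ W.Z) ⋙ X)) := by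
          erw [whiskerLeft_comp, Category.assoc, sum_inr S S' (W.Z ⋙ X) Z]
          rfl
      _ = (S'.θ X ⟨Z.Z ⋙ W.Z, Z.e ≫ whiskerLeft Z.Z W.e⟩ ≫ coprod.inr :
          (Z.Z ⋙ W.Z) ⋙ S'.H.obj X ⟶ (S.sum S').H.obj ((Z.Z ⋙ W.Z) ⋙ X)) := by
          erw [← Category.assoc, hS' X Z W]; exact rfl
      _ = whiskerLeft (Z.Z ⋙ W.Z) coprod.inr ≫
            (S.sum S').θ X ⟨Z.Z ⋙ W.Z, Z.e ≫ whiskerLeft Z.Z W.e⟩ :=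
          (sum_inr S S' X (⟨Z.Z ⋙ W.Z, Z.e ≫ whiskerLeft Z.Z W.e⟩ : Ptd C)).symm

lemma sum_unit (S S' : SigData C)
    (hS : ∀ X : C ⥤ C, S.θ X ⟨𝟭 C, 𝟙 (𝟭 C)⟩ = 𝟙 (S.H.obj X))
    (hS' : ∀ X : C ⥤ C, S'.θ X ⟨𝟭 C, 𝟙 (𝟭 C)⟩ = 𝟙 (S'.H.obj X))
    (X : C ⥤ C) :
    (S.sum S').θ X ⟨𝟭 C, 𝟙 (𝟭 C)⟩ = 𝟙 ((S.sum S').H.obj X) := by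
  apply sum_hom_ext S S' X (⟨𝟭 C, 𝟙 (𝟭 C)⟩ : Ptd C)
  · exact (sum_inl S S' X (⟨𝟭 C, 𝟙 (𝟭 C)⟩ : Ptd C)).trans
      ((congrArg (fun t => t ≫ (coprod.inl : S.H.obj X ⟶ S.H.obj X ⨿ S'.H.obj X)) (hS X)).trans
        ((Category.id_comp _).trans (Category.comp_id _).symm))
  · exact (sum_inr S S' X (⟨𝟭 C, 𝟙 (𝟭 C)⟩ : Ptd C)).trans
      ((congrArg (fun t => t ≫ (coprod.inr : S'.H.obj X ⟶ S.H.obj X ⨿ S'.H.obj X)) (hS' X)).trans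
        ((Category.id_comp _).trans (Category.comp_id _).symm))


/-! ### coherence lemmas for the app and abs signatures -/

lemma ap_nat_X (F G : C ⥤ C) (m : F ⟶ G) (W : Ptd C) :
    whiskerLeft W.Z ((appSig C).H.map m) ≫ (appSig C).θ G W
      = (appSig C).θ F W ≫ (appSig C).H.map (whiskerLeft W.Z m) := by
  dsimp only [appSig]
  apply Limits.prod.hom_ext
  · rw [Category.assoc, prod.lift_fst, ← whiskerLeft_comp, prod.map_fst,
      whiskerLeft_comp, Category.assoc, prod.map_fst, prod.lift_fst_assoc]
  · rw [Category.assoc, prod.lift_snd, ← whiskerLeft_comp, prod.map_snd,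
      whiskerLeft_comp, Category.assoc, prod.map_snd, prod.lift_snd_assoc]

lemma ap_nat_W (X : C ⥤ C) (W1 W2 : Ptd C) (g : W1.Z ⟶ W2.Z)
    (hg : W1.e ≫ g = W2.e) :
    whiskerRight g ((appSig C).H.obj X) ≫ (appSig C).θ X W2
      = (appSig C).θ X W1 ≫ (appSig C).H.map (whiskerRight g X) := by
  dsimp only [appSig]
  apply Limits.prod.hom_ext
  · rw [Category.assoc, prod.lift_fst, Category.assoc, prod.map_fst,
      prod.lift_fst_assoc]
    exact (whisker_exch prod.fst g).symm
  · rw [Category.assoc, prod.lift_snd, Category.assoc, prod.map_snd,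
      prod.lift_snd_assoc]
    exact (whisker_exch prod.snd g).symm

lemma ap_pent (X : C ⥤ C) (Z W : Ptd C) :
    whiskerLeft Z.Z ((appSig C).θ X W) ≫ (appSig C).θ (W.Z ⋙ X) Z
      = (appSig C).θ X ⟨Z.Z ⋙ W.Z, Z.e ≫ whiskerLeft Z.Z W.e⟩ := by
  dsimp only [appSig]
  apply Limits.prod.hom_ext
  · rw [Category.assoc, prod.lift_fst, ← whiskerLeft_comp, prod.lift_fst]
    exact (prod.lift_fst _ _).symm
  · rw [Category.assoc, prod.lift_snd, ← whiskerLeft_comp, prod.lift_snd]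
    exact (prod.lift_snd _ _).symm

lemma ap_unit (X : C ⥤ C) :
    (appSig C).θ X ⟨𝟭 C, 𝟙 (𝟭 C)⟩ = 𝟙 ((appSig C).H.obj X) := by
  dsimp only [appSig]
  apply Limits.prod.hom_ext
  · rw [prod.lift_fst]
    exact (Category.id_comp _).symm
  · rw [prod.lift_snd]
    exact (Category.id_comp _).symm

lemma ab_nat_X (F G : C ⥤ C) (m : F ⟶ G) (W : Ptd C) :
    whiskerLeft W.Z ((absSig C).H.map m) ≫ (absSig C).θ G W
      = (absSig C).θ F W ≫ (absSig C).H.map (whiskerLeft W.Z m) := by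
  ext A
  dsimp only [absSig, whiskerLeft_app, NatTrans.comp_app]
  exact (m.naturality _).symm

lemma ab_nat_W (X : C ⥤ C) (W1 W2 : Ptd C) (g : W1.Z ⟶ W2.Z)
    (hg : W1.e ≫ g = W2.e) :
    whiskerRight g ((absSig C).H.obj X) ≫ (absSig C).θ X W2
      = (absSig C).θ X W1 ≫ (absSig C).H.map (whiskerRight g X) := by
  ext A
  dsimp only [absSig, whiskerLeft_app, whiskerRight_app, NatTrans.comp_app,
    Functor.comp_map]
  refine (X.map_comp _ _).symm.trans ((congrArg X.map ?_).trans (X.map_comp _ _))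
  apply coprod.hom_ext
  · erw [show (optionF C).map (g.app A) = coprod.map (𝟙 _) (g.app A) from rfl,
      coprod.inl_map_assoc, Category.id_comp, coprod.inl_desc,
      coprod.inl_desc_assoc, Category.assoc, ← NatTrans.comp_app, hg]
  · erw [show (optionF C).map (g.app A) = coprod.map (𝟙 _) (g.app A) from rfl,
      coprod.inr_map_assoc, coprod.inr_desc, coprod.inr_desc_assoc]
    exact (g.naturality _).symm

lemma ab_pent (X : C ⥤ C) (Z W : Ptd C) :
    whiskerLeft Z.Z ((absSig C).θ X W) ≫ (absSig C).θ (W.Z ⋙ X) Z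
      = (absSig C).θ X ⟨Z.Z ⋙ W.Z, Z.e ≫ whiskerLeft Z.Z W.e⟩ := by
  ext A
  dsimp only [absSig, whiskerLeft_app, NatTrans.comp_app, Functor.comp_map]
  refine (X.map_comp _ _).symm.trans (congrArg X.map ?_)
  apply coprod.hom_ext
  · erw [coprod.inl_desc_assoc, Category.assoc, ← W.e.naturality, Functor.id_map,
      coprod.inl_desc_assoc, coprod.inl_desc, Category.assoc]
    rfl
  · erw [coprod.inr_desc_assoc, ← W.Z.map_comp, coprod.inr_desc, coprod.inr_desc]
    rfl

lemma ab_unit (X : C ⥤ C) :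
    (absSig C).θ X ⟨𝟭 C, 𝟙 (𝟭 C)⟩ = 𝟙 ((absSig C).H.obj X) := by
  ext A
  dsimp only [absSig, NatTrans.id_app]
  have h : (coprod.desc (coprod.inl ≫ 𝟙 ((𝟭 C).obj ((optionF C).obj A)))
      ((𝟭 C).map (coprod.inr : A ⟶ (optionF C).obj A)))
      = 𝟙 ((optionF C).obj A) := by
    apply coprod.hom_ext
    · rw [coprod.inl_desc]
      exact (Category.comp_id _).trans (Category.comp_id _).symm
    · rw [coprod.inr_desc]
      exact (Category.comp_id _).symm
  exact (congrArg X.map h).trans (X.map_id _)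

/-! ### the coherence lemmas for `LC` -/

lemma LC_nat_X {F G : C ⥤ C} (m : F ⟶ G) (W : Ptd C) :
    whiskerLeft W.Z ((LC (C := C)).H.map m) ≫ (LC (C := C)).θ G W
      = (LC (C := C)).θ F W ≫ (LC (C := C)).H.map (whiskerLeft W.Z m) :=
  sum_nat_X (appSig C) (absSig C) ap_nat_X ab_nat_X F G m W

lemma LC_nat_W (X : C ⥤ C) (W1 W2 : Ptd C) (g : W1.Z ⟶ W2.Z)
    (hg : W1.e ≫ g = W2.e) :
    whiskerRight g ((LC (C := C)).H.obj X) ≫ (LC (C := C)).θ X W2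
      = (LC (C := C)).θ X W1 ≫ (LC (C := C)).H.map (whiskerRight g X) :=
  sum_nat_W (appSig C) (absSig C) ap_nat_W ab_nat_W X W1 W2 g hg

lemma LC_pent (X : C ⥤ C) (Z W : Ptd C) :
    whiskerLeft Z.Z ((LC (C := C)).θ X W) ≫ (LC (C := C)).θ (W.Z ⋙ X) Z
      = (LC (C := C)).θ X ⟨Z.Z ⋙ W.Z, Z.e ≫ whiskerLeft Z.Z W.e⟩ :=
  sum_pent (appSig C) (absSig C) ap_pent ab_pent X Z W

lemma LC_unit (X : C ⥤ C) :
    (LC (C := C)).θ X ⟨𝟭 C, 𝟙 (𝟭 C)⟩ = 𝟙 ((LC (C := C)).H.obj X) :=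
  sum_unit (appSig C) (absSig C) ap_unit ab_unit X

end Aux

/-- **Substitution system for λ-calculus with explicit flattening on the
flattening-free terms** (Matthes–Uustalu, extended): let `(Lam, α, ⦃−⦄)` be the
initial substitution system for the λ-calculus signature `LC = App + Abs`, and let
`μ^Lam := ⦃id_{(Lam,η)}⦄ : Lam·Lam ⟶ Lam`.  Then `(Lam, [α, μ^Lam])` is an
`(Id + LCμ)`-algebra for the extended signature `LCμ = LC + Flat`, and defining
`⦃f⦄^Flat := ⦃f⦄` for each pointed `f : (Z,e) ⟶ (Lam,η)` yields a bracket
operation on this algebra, so `(Lam, [α, μ^Lam], ⦃−⦄^Flat)` is a heterogeneous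
substitution system for `LCμ`.  The only non-trivial verification is
`⦃f⦄^Flat ∘ (μ^Lam·Z) = μ^Lam ∘ Lam(⦃f⦄^Flat) ∘ (⦃f⦄^Flat·Lam·Z) ∘ (Lam·e·Lam·Z)`
(stated below via the strength of `Flat` and horizontal composition). -/
theorem lam_flatten_hss (Lam : HSS (LC (C := C)))
    -- `Lam` is the *initial* substitution system for `LC`:
    (hinit : ∀ B : HSS (LC (C := C)), ∃! β : Lam.T ⟶ B.T,
      Lam.η ≫ β = B.η ∧
      Lam.τ ≫ β = (LC (C := C)).H.map β ≫ B.τ ∧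
      ∀ (Z : Ptd C) (f : Z.Z ⟶ Lam.T) (hf : Z.e ≫ f = Lam.η)
        (hf' : Z.e ≫ (f ≫ β) = B.η),
        Lam.bracket Z f hf ≫ β = Functor.whiskerLeft Z.Z β ≫ B.bracket Z (f ≫ β) hf')
    (μLam : Lam.T ⋙ Lam.T ⟶ Lam.T)
    (hμ : μLam = Lam.bracket ⟨Lam.T, Lam.η⟩ (𝟙 Lam.T) (Category.comp_id Lam.η))
    (τμ : (LCμ (C := C)).H.obj Lam.T ⟶ Lam.T)
    (hτμ : τμ = Limits.coprod.desc Lam.τ μLam) :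
    ∀ (Z : Ptd C) (f : Z.Z ⟶ Lam.T) (hf : Z.e ≫ f = Lam.η),
      -- `⦃f⦄` is a bracket for the extended algebra `(Lam, [α, μ^Lam])` …
      (Functor.whiskerLeft Z.Z Lam.η ≫ Lam.bracket Z f hf = f) ∧
      (Functor.whiskerLeft Z.Z τμ ≫ Lam.bracket Z f hf =
        (LCμ (C := C)).θ Lam.T Z ≫
          (LCμ (C := C)).H.map (Lam.bracket Z f hf) ≫ τμ) ∧
      -- … it is the unique such morphism …
      (∀ h : Z.Z ⋙ Lam.T ⟶ Lam.T,
        Functor.whiskerLeft Z.Z Lam.η ≫ h = f →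
        Functor.whiskerLeft Z.Z τμ ≫ h =
          (LCμ (C := C)).θ Lam.T Z ≫ (LCμ (C := C)).H.map h ≫ τμ →
        h = Lam.bracket Z f hf) ∧
      -- … and the non-trivial verification: compatibility with `μ^Lam`.
      (Functor.whiskerLeft Z.Z μLam ≫ Lam.bracket Z f hf =
        (flatSig C).θ Lam.T Z ≫
          NatTrans.hcomp (Lam.bracket Z f hf) (Lam.bracket Z f hf) ≫ μLam) := by
  intro Z f hf
  have hbη := Lam.bracket_η Z f hf
  have hbτ := Lam.bracket_τ Z f hf
  have hμη : whiskerLeft Lam.T Lam.η ≫ μLam = 𝟙 Lam.T := by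
    rw [hμ]
    exact Lam.bracket_η ⟨Lam.T, Lam.η⟩ (𝟙 Lam.T) (Category.comp_id Lam.η)
  have hμτ : whiskerLeft Lam.T Lam.τ ≫ μLam
      = (LC (C := C)).θ Lam.T ⟨Lam.T, Lam.η⟩ ≫ (LC (C := C)).H.map μLam ≫ Lam.τ := by
    conv_lhs => rw [hμ]
    rw [Lam.bracket_τ ⟨Lam.T, Lam.η⟩ (𝟙 Lam.T) (Category.comp_id Lam.η), ← hμ]
  have hf' : (⟨Z.Z ⋙ Lam.T, Z.e ≫ whiskerLeft Z.Z Lam.η⟩ : Ptd C).e ≫ Lam.bracket Z f hf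
      = Lam.η := by
    show (Z.e ≫ whiskerLeft Z.Z Lam.η) ≫ Lam.bracket Z f hf = Lam.η
    rw [Category.assoc, hbη, hf]
  -- the identity is the bracket of `η` at the trivial pointed endofunctor
  have hid : (𝟙 Lam.T : Lam.T ⟶ Lam.T)
      = Lam.bracket ⟨𝟭 C, 𝟙 (𝟭 C)⟩ Lam.η (Category.id_comp Lam.η) := by
    apply Lam.bracket_unique ⟨𝟭 C, 𝟙 (𝟭 C)⟩ Lam.η (Category.id_comp Lam.η) (𝟙 Lam.T)
    · exact (Category.comp_id _).trans rfl
    · calc whiskerLeft (𝟭 C) Lam.τ ≫ 𝟙 Lam.T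
          = Lam.τ := (Category.comp_id _).trans rfl
        _ = 𝟙 ((LC (C := C)).H.obj Lam.T) ≫ Lam.τ := (Category.id_comp _).symm
        _ = (LC (C := C)).θ Lam.T ⟨𝟭 C, 𝟙 (𝟭 C)⟩ ≫ Lam.τ := by rw [LC_unit]
        _ = (LC (C := C)).θ Lam.T ⟨𝟭 C, 𝟙 (𝟭 C)⟩ ≫ (LC (C := C)).H.map (𝟙 Lam.T) ≫ Lam.τ := by
            exact congrArg (fun t => (LC (C := C)).θ Lam.T ⟨𝟭 C, 𝟙 (𝟭 C)⟩ ≫ t)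
              ((Category.id_comp Lam.τ).symm.trans
                (congrArg (· ≫ Lam.τ) ((LC (C := C)).H.map_id Lam.T).symm))
  -- substituting along `e` is the identity
  have hk : whiskerRight Z.e Lam.T ≫ Lam.bracket Z f hf = 𝟙 Lam.T := by
    have h1 : whiskerRight Z.e Lam.T ≫ Lam.bracket Z f hf
        = Lam.bracket ⟨𝟭 C, 𝟙 (𝟭 C)⟩ Lam.η (Category.id_comp Lam.η) := by
      apply Lam.bracket_unique ⟨𝟭 C, 𝟙 (𝟭 C)⟩ Lam.η (Category.id_comp Lam.η)
        (whiskerRight Z.e Lam.T ≫ Lam.bracket Z f hf)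
      · ext A
        dsimp only [NatTrans.comp_app, whiskerLeft_app, whiskerRight_app, Functor.id_obj]
        rw [← NatTrans.naturality_assoc]
        have hb := NatTrans.congr_app hbη A
        dsimp only [NatTrans.comp_app, whiskerLeft_app] at hb
        have he := NatTrans.congr_app hf A
        dsimp only [NatTrans.comp_app] at he
        rw [hb, Functor.id_map, he]
      · calc whiskerLeft (𝟭 C) Lam.τ ≫ whiskerRight Z.e Lam.T ≫ Lam.bracket Z f hf
            = (whiskerLeft (𝟭 C) Lam.τ ≫ whiskerRight Z.e Lam.T) ≫ Lam.bracket Z f hf :=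
              (Category.assoc _ _ _).symm
          _ = (whiskerRight Z.e ((LC (C := C)).H.obj Lam.T) ≫ whiskerLeft Z.Z Lam.τ) ≫
                Lam.bracket Z f hf :=
              congrArg (· ≫ Lam.bracket Z f hf) (whisker_exch Lam.τ Z.e)
          _ = whiskerRight Z.e ((LC (C := C)).H.obj Lam.T) ≫
                whiskerLeft Z.Z Lam.τ ≫ Lam.bracket Z f hf := Category.assoc _ _ _
          _ = whiskerRight Z.e ((LC (C := C)).H.obj Lam.T) ≫ (LC (C := C)).θ Lam.T Z ≫
                (LC (C := C)).H.map (Lam.bracket Z f hf) ≫ Lam.τ := by rw [hbτ]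
          _ = ((LC (C := C)).θ Lam.T ⟨𝟭 C, 𝟙 (𝟭 C)⟩ ≫
                (LC (C := C)).H.map (whiskerRight Z.e Lam.T)) ≫
                (LC (C := C)).H.map (Lam.bracket Z f hf) ≫ Lam.τ := by
              rw [← Category.assoc, LC_nat_W Lam.T ⟨𝟭 C, 𝟙 (𝟭 C)⟩ Z Z.e (Category.id_comp Z.e)]
          _ = (LC (C := C)).θ Lam.T ⟨𝟭 C, 𝟙 (𝟭 C)⟩ ≫
                (LC (C := C)).H.map (whiskerRight Z.e Lam.T ≫ Lam.bracket Z f hf) ≫ Lam.τ := by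
              simp only [Functor.map_comp, Category.assoc]
    rw [h1, ← hid]
  -- `⦃f⦄ · Lam` followed by `μ` is the bracket of `⦃f⦄` at `(Z·Lam, η∘e)`
  have hw : whiskerRight (Lam.bracket Z f hf) Lam.T ≫ μLam
      = Lam.bracket ⟨Z.Z ⋙ Lam.T, Z.e ≫ whiskerLeft Z.Z Lam.η⟩ (Lam.bracket Z f hf) hf' := by
    apply Lam.bracket_unique ⟨Z.Z ⋙ Lam.T, Z.e ≫ whiskerLeft Z.Z Lam.η⟩
      (Lam.bracket Z f hf) hf' (whiskerRight (Lam.bracket Z f hf) Lam.T ≫ μLam)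
    · calc whiskerLeft (Z.Z ⋙ Lam.T) Lam.η ≫ whiskerRight (Lam.bracket Z f hf) Lam.T ≫ μLam
          = (whiskerLeft (Z.Z ⋙ Lam.T) Lam.η ≫ whiskerRight (Lam.bracket Z f hf) Lam.T) ≫
              μLam := (Category.assoc _ _ _).symm
        _ = (whiskerRight (Lam.bracket Z f hf) (𝟭 C) ≫ whiskerLeft Lam.T Lam.η) ≫ μLam :=
            congrArg (· ≫ μLam) (whisker_exch Lam.η (Lam.bracket Z f hf))
        _ = whiskerRight (Lam.bracket Z f hf) (𝟭 C) ≫ whiskerLeft Lam.T Lam.η ≫ μLam :=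
            Category.assoc _ _ _
        _ = whiskerRight (Lam.bracket Z f hf) (𝟭 C) ≫ 𝟙 Lam.T := by rw [hμη]
        _ = Lam.bracket Z f hf := (Category.comp_id _).trans rfl
    · calc whiskerLeft (Z.Z ⋙ Lam.T) Lam.τ ≫ whiskerRight (Lam.bracket Z f hf) Lam.T ≫ μLam
          = (whiskerLeft (Z.Z ⋙ Lam.T) Lam.τ ≫ whiskerRight (Lam.bracket Z f hf) Lam.T) ≫
              μLam := (Category.assoc _ _ _).symm
        _ = (whiskerRight (Lam.bracket Z f hf) ((LC (C := C)).H.obj Lam.T) ≫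
              whiskerLeft Lam.T Lam.τ) ≫ μLam :=
            congrArg (· ≫ μLam) (whisker_exch Lam.τ (Lam.bracket Z f hf))
        _ = whiskerRight (Lam.bracket Z f hf) ((LC (C := C)).H.obj Lam.T) ≫
              whiskerLeft Lam.T Lam.τ ≫ μLam := Category.assoc _ _ _
        _ = whiskerRight (Lam.bracket Z f hf) ((LC (C := C)).H.obj Lam.T) ≫
              (LC (C := C)).θ Lam.T ⟨Lam.T, Lam.η⟩ ≫ (LC (C := C)).H.map μLam ≫ Lam.τ := by
            rw [hμτ]
        _ = ((LC (C := C)).θ Lam.T ⟨Z.Z ⋙ Lam.T, Z.e ≫ whiskerLeft Z.Z Lam.η⟩ ≫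
              (LC (C := C)).H.map (whiskerRight (Lam.bracket Z f hf) Lam.T)) ≫
              (LC (C := C)).H.map μLam ≫ Lam.τ := by
            rw [← Category.assoc,
              LC_nat_W Lam.T ⟨Z.Z ⋙ Lam.T, Z.e ≫ whiskerLeft Z.Z Lam.η⟩ ⟨Lam.T, Lam.η⟩
                (Lam.bracket Z f hf) hf']
        _ = (LC (C := C)).θ Lam.T ⟨Z.Z ⋙ Lam.T, Z.e ≫ whiskerLeft Z.Z Lam.η⟩ ≫
              (LC (C := C)).H.map (whiskerRight (Lam.bracket Z f hf) Lam.T ≫ μLam) ≫ Lam.τ := by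
            simp only [Functor.map_comp, Category.assoc]
  -- `μ·Z` followed by `⦃f⦄` is the same bracket
  have hL : whiskerLeft Z.Z μLam ≫ Lam.bracket Z f hf
      = Lam.bracket ⟨Z.Z ⋙ Lam.T, Z.e ≫ whiskerLeft Z.Z Lam.η⟩ (Lam.bracket Z f hf) hf' := by
    apply Lam.bracket_unique ⟨Z.Z ⋙ Lam.T, Z.e ≫ whiskerLeft Z.Z Lam.η⟩
      (Lam.bracket Z f hf) hf' (whiskerLeft Z.Z μLam ≫ Lam.bracket Z f hf)
    · calc whiskerLeft (Z.Z ⋙ Lam.T) Lam.η ≫ whiskerLeft Z.Z μLam ≫ Lam.bracket Z f hf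
          = whiskerLeft Z.Z (whiskerLeft Lam.T Lam.η ≫ μLam) ≫ Lam.bracket Z f hf := by
            rw [whiskerLeft_comp, Category.assoc]
            rfl
        _ = whiskerLeft Z.Z (𝟙 Lam.T) ≫ Lam.bracket Z f hf := by rw [hμη]
        _ = Lam.bracket Z f hf := by rw [whiskerLeft_id', Category.id_comp]
    · calc whiskerLeft (Z.Z ⋙ Lam.T) Lam.τ ≫ whiskerLeft Z.Z μLam ≫ Lam.bracket Z f hf
          = whiskerLeft Z.Z (whiskerLeft Lam.T Lam.τ ≫ μLam) ≫ Lam.bracket Z f hf := by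
            rw [whiskerLeft_comp, Category.assoc]
            rfl
        _ = whiskerLeft Z.Z ((LC (C := C)).θ Lam.T ⟨Lam.T, Lam.η⟩ ≫
              (LC (C := C)).H.map μLam ≫ Lam.τ) ≫ Lam.bracket Z f hf := by rw [hμτ]
        _ = whiskerLeft Z.Z ((LC (C := C)).θ Lam.T ⟨Lam.T, Lam.η⟩) ≫
              whiskerLeft Z.Z ((LC (C := C)).H.map μLam) ≫
              whiskerLeft Z.Z Lam.τ ≫ Lam.bracket Z f hf := by
            simp only [whiskerLeft_comp, Category.assoc]
        _ = whiskerLeft Z.Z ((LC (C := C)).θ Lam.T ⟨Lam.T, Lam.η⟩) ≫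
              whiskerLeft Z.Z ((LC (C := C)).H.map μLam) ≫ (LC (C := C)).θ Lam.T Z ≫
              (LC (C := C)).H.map (Lam.bracket Z f hf) ≫ Lam.τ := by rw [hbτ]
        _ = whiskerLeft Z.Z ((LC (C := C)).θ Lam.T ⟨Lam.T, Lam.η⟩) ≫
              (LC (C := C)).θ (Lam.T ⋙ Lam.T) Z ≫ (LC (C := C)).H.map (whiskerLeft Z.Z μLam) ≫
              (LC (C := C)).H.map (Lam.bracket Z f hf) ≫ Lam.τ := by
            rw [reassoc_of% LC_nat_X μLam Z]
        _ = (whiskerLeft Z.Z ((LC (C := C)).θ Lam.T ⟨Lam.T, Lam.η⟩) ≫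
              (LC (C := C)).θ (Lam.T ⋙ Lam.T) Z) ≫ (LC (C := C)).H.map (whiskerLeft Z.Z μLam) ≫
              (LC (C := C)).H.map (Lam.bracket Z f hf) ≫ Lam.τ := by
            simp only [Category.assoc]
        _ = (LC (C := C)).θ Lam.T ⟨Z.Z ⋙ Lam.T, Z.e ≫ whiskerLeft Z.Z Lam.η⟩ ≫
              (LC (C := C)).H.map (whiskerLeft Z.Z μLam) ≫
              (LC (C := C)).H.map (Lam.bracket Z f hf) ≫ Lam.τ := by
            rw [LC_pent Lam.T Z ⟨Lam.T, Lam.η⟩]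
        _ = (LC (C := C)).θ Lam.T ⟨Z.Z ⋙ Lam.T, Z.e ≫ whiskerLeft Z.Z Lam.η⟩ ≫
              (LC (C := C)).H.map (whiskerLeft Z.Z μLam ≫ Lam.bracket Z f hf) ≫ Lam.τ := by
            simp only [Functor.map_comp, Category.assoc]
  -- the key fourth property
  have e1 : (flatSig C).θ Lam.T Z ≫
        NatTrans.hcomp (Lam.bracket Z f hf) (Lam.bracket Z f hf) ≫ μLam
      = whiskerRight (Lam.bracket Z f hf) Lam.T ≫ μLam := by
    ext A
    dsimp only [flatSig, NatTrans.hcomp, NatTrans.comp_app, whiskerLeft_app,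
      whiskerRight_app, Functor.comp_obj, Functor.comp_map]
    have hkA := NatTrans.congr_app hk ((Z.Z ⋙ Lam.T).obj A)
    dsimp only [NatTrans.comp_app, whiskerRight_app, NatTrans.id_app] at hkA
    simp only [Category.assoc]
    rw [reassoc_of% hkA]
  have key4 : whiskerLeft Z.Z μLam ≫ Lam.bracket Z f hf
      = (flatSig C).θ Lam.T Z ≫
          NatTrans.hcomp (Lam.bracket Z f hf) (Lam.bracket Z f hf) ≫ μLam := by
    rw [e1, hL, hw]
  -- item 2: compatibility with the full algebra structure
  have hsumθ : (LCμ (C := C)).θ Lam.T Z = ((LC (C := C)).sum (flatSig C)).θ Lam.T Z := rfl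
  have hsumH : (LCμ (C := C)).H.map (Lam.bracket Z f hf)
      = ((LC (C := C)).sum (flatSig C)).H.map (Lam.bracket Z f hf) := rfl
  have item2 : whiskerLeft Z.Z τμ ≫ Lam.bracket Z f hf
      = (LCμ (C := C)).θ Lam.T Z ≫ (LCμ (C := C)).H.map (Lam.bracket Z f hf) ≫ τμ := by
    rw [hτμ, hsumθ, hsumH]
    apply sum_hom_ext (LC (C := C)) (flatSig C) Lam.T Z
    · calc whiskerLeft Z.Z (coprod.inl : (LC (C := C)).H.obj Lam.T ⟶ _) ≫
            whiskerLeft Z.Z (coprod.desc Lam.τ μLam) ≫ Lam.bracket Z f hf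
          = whiskerLeft Z.Z Lam.τ ≫ Lam.bracket Z f hf := by
            erw [← Category.assoc, ← whiskerLeft_comp, coprod.inl_desc]
        _ = (LC (C := C)).θ Lam.T Z ≫ (LC (C := C)).H.map (Lam.bracket Z f hf) ≫ Lam.τ := hbτ
        _ = (LC (C := C)).θ Lam.T Z ≫ (LC (C := C)).H.map (Lam.bracket Z f hf) ≫
              coprod.inl ≫ coprod.desc Lam.τ μLam :=
            congrArg (fun t => (LC (C := C)).θ Lam.T Z ≫
              (LC (C := C)).H.map (Lam.bracket Z f hf) ≫ t) (coprod.inl_desc Lam.τ μLam).symm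
        _ = (LC (C := C)).θ Lam.T Z ≫ coprod.inl ≫
              ((LC (C := C)).sum (flatSig C)).H.map (Lam.bracket Z f hf) ≫
              coprod.desc Lam.τ μLam := by
            erw [sum_H_map, coprod.inl_map_assoc]
            exact rfl
        _ = whiskerLeft Z.Z coprod.inl ≫ ((LC (C := C)).sum (flatSig C)).θ Lam.T Z ≫
              ((LC (C := C)).sum (flatSig C)).H.map (Lam.bracket Z f hf) ≫
              coprod.desc Lam.τ μLam := by
            erw [← Category.assoc, ← sum_inl (LC (C := C)) (flatSig C) Lam.T Z, Category.assoc]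
            rfl
    · calc whiskerLeft Z.Z (coprod.inr : (flatSig C).H.obj Lam.T ⟶ ((LC (C := C)).sum (flatSig C)).H.obj Lam.T) ≫
            whiskerLeft Z.Z (coprod.desc Lam.τ μLam) ≫ Lam.bracket Z f hf
          = (whiskerLeft Z.Z μLam ≫ Lam.bracket Z f hf :
              Z.Z ⋙ (flatSig C).H.obj Lam.T ⟶ Lam.T) := by
            erw [← Category.assoc, ← whiskerLeft_comp, coprod.inr_desc]
        _ = (flatSig C).θ Lam.T Z ≫
              NatTrans.hcomp (Lam.bracket Z f hf) (Lam.bracket Z f hf) ≫ μLam := key4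
        _ = (flatSig C).θ Lam.T Z ≫ (flatSig C).H.map (Lam.bracket Z f hf) ≫
              coprod.inr ≫ coprod.desc Lam.τ μLam :=
            congrArg (fun t => (flatSig C).θ Lam.T Z ≫ t)
              ((congrArg (fun t => NatTrans.hcomp (Lam.bracket Z f hf) (Lam.bracket Z f hf) ≫ t)
                (coprod.inr_desc Lam.τ μLam).symm).trans rfl)
        _ = (flatSig C).θ Lam.T Z ≫ coprod.inr ≫
              ((LC (C := C)).sum (flatSig C)).H.map (Lam.bracket Z f hf) ≫
              coprod.desc Lam.τ μLam := by
            erw [sum_H_map, coprod.inr_map_assoc]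
        _ = whiskerLeft Z.Z coprod.inr ≫ ((LC (C := C)).sum (flatSig C)).θ Lam.T Z ≫
              ((LC (C := C)).sum (flatSig C)).H.map (Lam.bracket Z f hf) ≫
              coprod.desc Lam.τ μLam := by
            erw [← Category.assoc, ← sum_inr (LC (C := C)) (flatSig C) Lam.T Z, Category.assoc]
            rfl
  -- item 3: uniqueness
  have item3 : ∀ h : Z.Z ⋙ Lam.T ⟶ Lam.T,
      whiskerLeft Z.Z Lam.η ≫ h = f →
      whiskerLeft Z.Z τμ ≫ h =
        (LCμ (C := C)).θ Lam.T Z ≫ (LCμ (C := C)).H.map h ≫ τμ →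
      h = Lam.bracket Z f hf := by
    intro h h1 h2
    apply Lam.bracket_unique Z f hf h h1
    rw [hτμ, show (LCμ (C := C)).θ Lam.T Z = ((LC (C := C)).sum (flatSig C)).θ Lam.T Z from rfl,
      show (LCμ (C := C)).H.map h = ((LC (C := C)).sum (flatSig C)).H.map h from rfl] at h2
    have h3 := congrArg (fun t => whiskerLeft Z.Z
      (coprod.inl : (LC (C := C)).H.obj Lam.T ⟶
        ((LC (C := C)).sum (flatSig C)).H.obj Lam.T) ≫ t) h2
    have hB : whiskerLeft Z.Z (coprod.inl : (LC (C := C)).H.obj Lam.T ⟶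
          ((LC (C := C)).sum (flatSig C)).H.obj Lam.T) ≫
        ((LC (C := C)).sum (flatSig C)).θ Lam.T Z ≫
          ((LC (C := C)).sum (flatSig C)).H.map h ≫ coprod.desc Lam.τ μLam
        = (LC (C := C)).θ Lam.T Z ≫ (LC (C := C)).H.map h ≫ Lam.τ := by
      refine Eq.trans (b := (LC (C := C)).θ Lam.T Z ≫ coprod.inl ≫
          ((LC (C := C)).sum (flatSig C)).H.map h ≫ coprod.desc Lam.τ μLam) ?_ ?_
      · symm
        erw [← Category.assoc, ← sum_inl (LC (C := C)) (flatSig C) Lam.T Z, Category.assoc]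
        rfl
      · erw [sum_H_map, coprod.inl_map_assoc, coprod.inl_desc]
    erw [← Category.assoc, ← whiskerLeft_comp, coprod.inl_desc] at h3
    exact h3.trans hB
  exact ⟨hbη, item2, item3, key4⟩
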